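/- Let T be a bounded self-adjoint operator on a separable infinite-dimensional complex Hilbert space H and let x ∈ σ(T). Then there exists η ∈ H such that d⁻_{μ_η^T}(x) = 0. -/

import Mathlib

open MeasureTheory Filter Set Metric
open scoped ENNReal Topology Classical

noncomputable section

/-- `μ` is uniformly `α`-Hölder continuous: there is `C > 0` with
`μ(I) < C |I|^α` for every (nondegenerate) interval `I` with `|I| < 1`. -/
def UnifHolder (μ : Measure ℝ) (α : ℝ) : Prop :=
  ∃ C > (0 : ℝ), ∀ a b : ℝ, a < b → b - a < 1 →
    μ (Set.Icc a b) < ENNReal.ofReal (C * (b - a) ^ α)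

/-- The Fourier transform `μ̂(s) = ∫ e^{-isx} dμ(x)` of a finite Borel measure on `ℝ`. -/
def measureFT (μ : Measure ℝ) (s : ℝ) : ℂ :=
  ∫ x : ℝ, Complex.exp (-(s * x) * Complex.I) ∂μ

/-- The time-average quantum return probability
`W_μ(t) = (1/t) ∫_0^t |μ̂(s)|² ds`. -/
def Wavg (μ : Measure ℝ) (t : ℝ) : ℝ :=
  (1 / t) * ∫ s in Set.Ioc (0 : ℝ) t, ‖measureFT μ s‖ ^ 2

/-- `μ` is the spectral measure of the pair `(T, ψ)`: it is finite, vanishes outside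
the spectrum of `T`, and `∫ f dμ = ⟨ψ, f(T)ψ⟩` for every continuous `f : ℝ → ℝ`,
where `f(T)` is given by the continuous functional calculus. -/
def IsSpectralMeasure {H : Type*} [NormedAddCommGroup H] [InnerProductSpace ℂ H]
    [CompleteSpace H] (T : H →L[ℂ] H) (ψ : H) (μ : Measure ℝ) : Prop :=
  IsFiniteMeasure μ ∧ μ {x : ℝ | (x : ℂ) ∉ spectrum ℂ T} = 0 ∧
    ∀ f : C(ℝ, ℝ), ∫ x, f x ∂μ = (inner ℂ ψ ((cfc (f : ℝ → ℝ) T) ψ) : ℂ).re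

/-- The real part of the spectrum of a bounded operator. -/
def realSpectrum {H : Type*} [NormedAddCommGroup H] [InnerProductSpace ℂ H]
    [CompleteSpace H] (T : H →L[ℂ] H) : Set ℝ :=
  {x : ℝ | (x : ℂ) ∈ spectrum ℂ T}

/-- `μ` is `α`-Hausdorff continuous: `μ(Λ) = 0` for every Borel set `Λ` with
`h^α(Λ) = 0`. -/
def HausdorffCont (μ : Measure ℝ) (α : ℝ) : Prop :=
  ∀ Λ : Set ℝ, MeasurableSet Λ → μH[α] Λ = 0 → μ Λ = 0

/-- The lower pointwise scaling exponent `d⁻_μ(x)`, with value `∞` when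
`μ(B(x;ε)) = 0` for some `ε > 0`. -/
def dLow (μ : Measure ℝ) (x : ℝ) : EReal :=
  if ∃ ε > (0 : ℝ), μ (Metric.ball x ε) = 0 then ⊤
  else Filter.liminf
    (fun ε : ℝ => ((Real.log (μ (Metric.ball x ε)).toReal / Real.log ε : ℝ) : EReal))
    (𝓝[>] (0 : ℝ))

/-- The upper pointwise scaling exponent `d⁺_μ(x)`, with value `∞` when
`μ(B(x;ε)) = 0` for some `ε > 0`. -/
def dUp (μ : Measure ℝ) (x : ℝ) : EReal :=
  if ∃ ε > (0 : ℝ), μ (Metric.ball x ε) = 0 then ⊤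
  else Filter.limsup
    (fun ε : ℝ => ((Real.log (μ (Metric.ball x ε)).toReal / Real.log ε : ℝ) : EReal))
    (𝓝[>] (0 : ℝ))

/-- The lower correlation dimension `D⁻_μ(2)`. -/
def DLow2 (μ : Measure ℝ) : EReal :=
  Filter.liminf
    (fun ε : ℝ =>
      ((Real.log (∫ x, (μ (Metric.ball x ε)).toReal ∂μ) / Real.log ε : ℝ) : EReal))
    (𝓝[>] (0 : ℝ))

/-- The upper correlation dimension `D⁺_μ(2)`. -/
def DUp2 (μ : Measure ℝ) : EReal :=
  Filter.limsup
    (fun ε : ℝ =>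
      ((Real.log (∫ x, (μ (Metric.ball x ε)).toReal ∂μ) / Real.log ε : ℝ) : EReal))
    (𝓝[>] (0 : ℝ))

/-- A set is generic (residual / comeagre in the Baire sense used in the paper)
if it contains a dense `G_δ` set. -/
def Generic {X : Type*} [TopologicalSpace X] (A : Set X) : Prop :=
  ∃ S : Set X, S ⊆ A ∧ IsGδ S ∧ Dense S

namespace Stmt11Aux

/-- A tent function: equals 1 on `|t-x| ≤ ε/2`, vanishes for `|t-x| ≥ ε`. -/
def tent (x ε t : ℝ) : ℝ := max 0 (min 1 (2 - 2 * |t - x| / ε))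

lemma tent_nonneg (x ε t : ℝ) : 0 ≤ tent x ε t := le_max_left _ _

lemma tent_le_one (x ε t : ℝ) : tent x ε t ≤ 1 := max_le zero_le_one (min_le_left _ _)

lemma tent_abs_le_one (x ε t : ℝ) : |tent x ε t| ≤ 1 :=
  abs_le.2 ⟨by linarith [tent_nonneg x ε t], tent_le_one x ε t⟩

lemma tent_continuous (x ε : ℝ) : Continuous (tent x ε) := by
  unfold tent; fun_prop

lemma tent_eq_one {x ε t : ℝ} (hε : 0 < ε) (h : |t - x| ≤ ε / 2) : tent x ε t = 1 := by
  have h2 : (1:ℝ) ≤ 2 - 2 * |t - x| / ε := by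
    have : 2 * |t - x| / ε ≤ 1 := by rw [div_le_one hε]; linarith
    linarith
  unfold tent
  rw [min_eq_left h2, max_eq_right zero_le_one]

lemma tent_eq_zero {x ε t : ℝ} (hε : 0 < ε) (h : ε ≤ |t - x|) : tent x ε t = 0 := by
  have h2 : 2 - 2 * |t - x| / ε ≤ 0 := by
    have : 2 ≤ 2 * |t - x| / ε := by rw [le_div_iff₀ hε]; linarith
    linarith
  unfold tent
  rw [max_eq_left (le_trans (min_le_right _ _) h2)]

lemma tent_pos_imp {x ε t : ℝ} (hε : 0 < ε) (h : tent x ε t ≠ 0) : |t - x| < ε := by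
  by_contra h'
  exact h (tent_eq_zero hε (not_lt.1 h'))

lemma tent_self {x ε : ℝ} (hε : 0 < ε) : tent x ε x = 1 :=
  tent_eq_one hε (by simp; linarith)

variable {H : Type*} [NormedAddCommGroup H] [InnerProductSpace ℂ H] [CompleteSpace H]

/-- local copy of the spectral-measure property to develop lemmas against -/
def SpecMeas (T : H →L[ℂ] H) (ψ : H) (μ : Measure ℝ) : Prop :=
  IsFiniteMeasure μ ∧
    ∀ f : C(ℝ, ℝ), ∫ x, f x ∂μ = (inner ℂ ψ ((cfc (f : ℝ → ℝ) T) ψ) : ℂ).re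

variable {T : H →L[ℂ] H} {μm : H → Measure ℝ}

section basic
variable (hT : IsSelfAdjoint T) (hμm : ∀ ψ : H, SpecMeas T ψ (μm ψ))
include hμm

lemma int_eq (ψ : H) {f : ℝ → ℝ} (hf : Continuous f) :
    ∫ t, f t ∂(μm ψ) = (inner ℂ ψ ((cfc f T) ψ) : ℂ).re :=
  (hμm ψ).2 ⟨f, hf⟩

lemma fin (ψ : H) : IsFiniteMeasure (μm ψ) := (hμm ψ).1

lemma integ (ψ : H) {f : ℝ → ℝ} (hf : Continuous f) (h1 : ∀ t, |f t| ≤ 1) :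
    Integrable f (μm ψ) := by
  haveI := fin hμm ψ
  exact Integrable.mono' (integrable_const 1) hf.aestronglyMeasurable
    (ae_of_all _ fun t => by simpa using h1 t)

omit hμm in
lemma inner_move (ψ φ : H) {S : H →L[ℂ] H} (hS : IsSelfAdjoint S) :
    (inner ℂ ψ (S φ) : ℂ) = inner ℂ (S ψ) φ := by
  rw [← ContinuousLinearMap.adjoint_inner_left, hS.adjoint_eq]

lemma quad (ψ : H) {f : ℝ → ℝ} (hf : Continuous f) (h0 : ∀ t, 0 ≤ f t) :
    ∫ t, f t ∂(μm ψ) = ‖(cfc (fun t => Real.sqrt (f t)) T) ψ‖ ^ 2 := by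
  set g : ℝ → ℝ := fun t => Real.sqrt (f t) with hg
  have hgc : Continuous g := Real.continuous_sqrt.comp hf
  have key : cfc f T = cfc g T * cfc g T := by
    rw [← cfc_mul g g T hgc.continuousOn hgc.continuousOn]
    exact cfc_congr fun t _ => (Real.mul_self_sqrt (h0 t)).symm
  have hS : IsSelfAdjoint (cfc g T) := cfc_predicate g T
  rw [int_eq hμm ψ hf, key, ContinuousLinearMap.mul_apply,
    inner_move ψ _ hS]
  have := inner_self_eq_norm_sq (𝕜 := ℂ) ((cfc g T) ψ)
  simpa [RCLike.re_to_complex] using this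

lemma mass (hT : IsSelfAdjoint T) (ψ : H) : ((μm ψ) Set.univ).toReal = ‖ψ‖ ^ 2 := by
  haveI := fin hμm ψ
  have h := int_eq hμm ψ (f := fun _ => (1:ℝ)) continuous_const
  rw [integral_const, cfc_const_one ℝ T hT] at h
  have h2 := inner_self_eq_norm_sq (𝕜 := ℂ) ψ
  simp only [ContinuousLinearMap.one_apply] at h
  rw [smul_eq_mul, mul_one] at h
  rw [show ((μm ψ) Set.univ).toReal = (μm ψ).real Set.univ from rfl, h]
  simpa [RCLike.re_to_complex] using h2

lemma int_le_mass (hT : IsSelfAdjoint T) (ψ : H) {f : ℝ → ℝ} (hf : Continuous f)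
    (h1 : ∀ t, f t ≤ 1) (h0 : ∀ t, 0 ≤ f t) :
    ∫ t, f t ∂(μm ψ) ≤ ‖ψ‖ ^ 2 := by
  haveI := fin hμm ψ
  rw [← mass hμm hT ψ]
  calc ∫ t, f t ∂(μm ψ) ≤ ∫ _t, (1:ℝ) ∂(μm ψ) :=
        integral_mono (integ hμm ψ hf fun t => abs_le.2 ⟨by linarith [h0 t], h1 t⟩)
          (integrable_const 1) h1
    _ = ((μm ψ) Set.univ).toReal := by rw [integral_const, smul_eq_mul, mul_one]; rfl

lemma int_le_meas (ψ : H) {f : ℝ → ℝ} {s : Set ℝ} (hs : MeasurableSet s)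
    (hf : Continuous f) (h1 : ∀ t, f t ≤ 1) (h0 : ∀ t, 0 ≤ f t)
    (hout : ∀ t ∉ s, f t = 0) :
    ∫ t, f t ∂(μm ψ) ≤ ((μm ψ) s).toReal := by
  haveI := fin hμm ψ
  have hind : ∀ t, f t ≤ s.indicator (fun _ => (1:ℝ)) t := fun t => by
    by_cases h : t ∈ s
    · simpa [h] using h1 t
    · simp [h, hout t h]
  calc ∫ t, f t ∂(μm ψ) ≤ ∫ t, s.indicator (fun _ => (1:ℝ)) t ∂(μm ψ) :=
        integral_mono (integ hμm ψ hf fun t => abs_le.2 ⟨by linarith [h0 t], h1 t⟩)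
          ((integrable_const 1).indicator hs) hind
    _ = ((μm ψ) s).toReal := by
        rw [integral_indicator hs, setIntegral_const, smul_eq_mul, mul_one]; rfl

end basic
section conc
variable (hT : IsSelfAdjoint T) (hμm : ∀ ψ : H, SpecMeas T ψ (μm ψ))
include hT hμm

lemma conc [Nontrivial H] {x : ℝ} (hx : x ∈ spectrum ℝ T) {ε : ℝ} (hε : 0 < ε) :
    ∃ ψ : H, ‖ψ‖ = 1 ∧ ∫ t, tent x ε t ∂(μm ψ) = 1 := by
  have hε2 : 0 < ε / 2 := by linarith
  have hε4 : 0 < ε / 4 := by linarith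
  set h : ℝ → ℝ := tent x (ε / 2) with hh
  have hhc : Continuous h := tent_continuous _ _
  -- Step 1: some ψ₀ has positive h²-integral
  have step1 : ∃ ψ₀ : H, 0 < ∫ t, h t * h t ∂(μm ψ₀) := by
    by_contra hcon
    push_neg at hcon
    have hzero : ∀ ψ : H, ∫ t, tent x (ε/4) t ∂(μm ψ) = 0 := by
      intro ψ
      haveI := fin hμm ψ
      have hpt : ∀ t, tent x (ε/4) t ≤ h t * h t := by
        intro t
        by_cases h0 : tent x (ε/4) t = 0
        · rw [h0]; exact mul_nonneg (tent_nonneg _ _ _) (tent_nonneg _ _ _)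
        · have hlt : |t - x| < ε/4 := tent_pos_imp hε4 h0
          have : h t = 1 := tent_eq_one hε2 (by linarith)
          rw [this, one_mul]; exact tent_le_one _ _ _
      have hle : ∫ t, tent x (ε/4) t ∂(μm ψ) ≤ ∫ t, h t * h t ∂(μm ψ) :=
        integral_mono (integ hμm ψ (tent_continuous _ _) (tent_abs_le_one _ _))
          (integ hμm ψ (hhc.mul hhc) (fun t => by
            have := tent_abs_le_one x (ε/2) t
            rw [abs_mul]
            calc |h t| * |h t| ≤ 1 * 1 := by
                  apply mul_le_mul this this (abs_nonneg _) zero_le_one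
              _ = 1 := one_mul 1)) hpt
      have hge : 0 ≤ ∫ t, tent x (ε/4) t ∂(μm ψ) :=
        integral_nonneg (fun t => tent_nonneg _ _ _)
      linarith [hcon ψ]
    set g : ℝ → ℝ := fun t => Real.sqrt (tent x (ε/4) t) with hgdef
    have hgc : Continuous g := Real.continuous_sqrt.comp (tent_continuous _ _)
    have hnull : ∀ ψ : H, (cfc g T) ψ = 0 := by
      intro ψ
      have hq := quad hμm ψ (tent_continuous x (ε/4)) (tent_nonneg x (ε/4))
      rw [hzero ψ] at hq
      have : ‖(cfc g T) ψ‖ = 0 := by nlinarith [norm_nonneg ((cfc g T) ψ)]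
      exact norm_eq_zero.1 this
    have hg0 : cfc g T = 0 := by ext ψ; simp [hnull ψ]
    have hf0 : cfc (tent x (ε/4)) T = 0 := by
      rw [show tent x (ε/4) = fun t => g t * g t from
          funext fun t => (Real.mul_self_sqrt (tent_nonneg _ _ _)).symm,
        cfc_mul g g T hgc.continuousOn hgc.continuousOn, hg0, mul_zero]
    have hspec := cfc_map_spectrum (R := ℝ) (tent x (ε/4)) T hT
      (tent_continuous x (ε/4)).continuousOn
    rw [hf0] at hspec
    have h1 : (1:ℝ) ∈ spectrum ℝ (0 : H →L[ℂ] H) := by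
      rw [hspec]
      exact ⟨x, hx, tent_self hε4⟩
    rw [spectrum.zero_eq] at h1
    simpa using h1
  obtain ⟨ψ₀, hψ₀⟩ := step1
  haveI := fin hμm ψ₀
  set G := cfc h T with hG
  have hGsa : IsSelfAdjoint G := cfc_predicate _ T
  set ψ' := G ψ₀ with hψ'
  have hinner_hh : (inner ℂ ψ₀ ((cfc (fun t => h t * h t) T) ψ₀) : ℂ).re
      = ‖ψ'‖ ^ 2 := by
    rw [cfc_mul h h T hhc.continuousOn hhc.continuousOn,
      ContinuousLinearMap.mul_apply, inner_move ψ₀ _ hGsa]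
    have := inner_self_eq_norm_sq (𝕜 := ℂ) ψ'
    show (inner ℂ ψ' ψ' : ℂ).re = ‖ψ'‖ ^ 2
    simpa [RCLike.re_to_complex] using this
  have hnorm' : ‖ψ'‖ ^ 2 = ∫ t, h t * h t ∂(μm ψ₀) := by
    rw [int_eq hμm ψ₀ (f := fun t => h t * h t) (hhc.mul hhc), hinner_hh]
  have hψ'pos : 0 < ‖ψ'‖ := by nlinarith [norm_nonneg ψ', hψ₀]
  set F := cfc (tent x ε) T with hF
  have hFc : Continuous (tent x ε) := tent_continuous _ _
  have hFmul : cfc (fun t => h t * (tent x ε t * h t)) T = G * (F * G) := by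
    rw [cfc_mul h (fun t => tent x ε t * h t) T hhc.continuousOn
      ((hFc.mul hhc).continuousOn),
      cfc_mul (tent x ε) h T hFc.continuousOn hhc.continuousOn]
  have hptw : (fun t => h t * (tent x ε t * h t)) = fun t => h t * h t := by
    funext t
    by_cases h0 : h t = 0
    · simp [h0]
    · have hlt : |t - x| < ε / 2 := tent_pos_imp hε2 h0
      rw [tent_eq_one hε (by linarith)]
      ring
  have hint' : (inner ℂ ψ' (F ψ') : ℂ).re = ‖ψ'‖ ^ 2 := by
    have e1 : (inner ℂ ψ' (F ψ') : ℂ) = inner ℂ ψ₀ ((G * (F * G)) ψ₀) := by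
      simp only [hψ', ContinuousLinearMap.mul_apply]
      rw [inner_move ψ₀ _ hGsa]
    rw [e1, ← hFmul, hptw, hinner_hh]
  -- normalize
  set c : ℝ := ‖ψ'‖⁻¹ with hc
  have hcpos : 0 < c := inv_pos.2 hψ'pos
  refine ⟨(c : ℂ) • ψ', ?_, ?_⟩
  · rw [norm_smul]
    simp [hc, Complex.norm_real, abs_of_pos hcpos, inv_mul_cancel₀ hψ'pos.ne']
  · rw [int_eq hμm _ hFc]
    have e2 : (F ((c:ℂ) • ψ')) = (c:ℂ) • F ψ' := map_smul F _ _
    rw [e2, inner_smul_left, inner_smul_right]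
    have : (starRingEnd ℂ) (c:ℂ) = (c:ℂ) := Complex.conj_ofReal c
    rw [this]
    have hre : ((c:ℂ) * ((c:ℂ) * (inner ℂ ψ' (F ψ') : ℂ))).re
        = c * (c * (inner ℂ ψ' (F ψ') : ℂ).re) := by
      simp [Complex.mul_re]
    rw [hre, hint', hc]
    field_simp
end conc
section step
variable (hT : IsSelfAdjoint T) (hμm : ∀ ψ : H, SpecMeas T ψ (μm ψ))

/-- shorthand for the square-root tent operator -/
def sqT (T : H →L[ℂ] H) (x ε : ℝ) : H →L[ℂ] H :=
  cfc (fun t => Real.sqrt (tent x ε t)) T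

include hT hμm in
lemma contract {x ε : ℝ} (u : H) : ‖sqT T x ε u‖ ≤ ‖u‖ := by
  have h := quad hμm u (tent_continuous x ε) (tent_nonneg x ε)
  have h2 : ∫ t, tent x ε t ∂(μm u) ≤ ‖u‖ ^ 2 :=
    int_le_mass hμm hT u (tent_continuous x ε) (tent_le_one x ε) (tent_nonneg x ε)
  rw [sqT]
  nlinarith [norm_nonneg ((cfc (fun t => Real.sqrt (tent x ε t)) T) u), norm_nonneg u]

include hμm in
lemma meas_ge {x ε : ℝ} (hε : 0 < ε) (u : H) :
    ‖sqT T x ε u‖ ^ 2 ≤ ((μm u) (Metric.ball x ε)).toReal := by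
  rw [sqT, ← quad hμm u (tent_continuous x ε) (tent_nonneg x ε)]
  refine int_le_meas hμm u measurableSet_ball (tent_continuous x ε)
    (tent_le_one x ε) (tent_nonneg x ε) (fun t ht => ?_)
  rw [Metric.mem_ball, Real.dist_eq, not_lt] at ht
  exact tent_eq_zero hε ht

include hT hμm in
lemma step_ex [Nontrivial H] {x : ℝ} (hx : x ∈ spectrum ℝ T) (w : H) {ε B : ℝ}
    (hε : 0 < ε) (hB : 0 < B) :
    ∃ v : H, ‖v‖ ≤ B ∧ B ≤ ‖sqT T x ε (w + v)‖ := by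
  obtain ⟨ψ, hψ1, hψi⟩ := conc hT hμm hx hε
  set S := sqT T x ε with hS
  have hSψ : ‖S ψ‖ ^ 2 = 1 := by
    rw [hS, sqT, ← quad hμm ψ (tent_continuous x ε) (tent_nonneg x ε), hψi]
  set r := (inner ℂ (S w) (S ψ) : ℂ).re with hr
  set σ : ℝ := if 0 ≤ r then B else -B with hσ
  have hσsq : σ ^ 2 = B ^ 2 := by
    rw [hσ]; split <;> ring
  have hσr : 0 ≤ σ * r := by
    rw [hσ]; split
    · positivity
    · rename_i hneg
      push_neg at hneg
      nlinarith
  refine ⟨(σ : ℂ) • ψ, ?_, ?_⟩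
  · rw [norm_smul, hψ1, mul_one, Complex.norm_real, Real.norm_eq_abs, hσ]
    split <;> simp [le_abs_self, abs_of_pos hB, abs_neg]
  · have expand : ‖S (w + (σ:ℂ) • ψ)‖ ^ 2
        = ‖S w‖ ^ 2 + 2 * (σ * r) + σ ^ 2 * ‖S ψ‖ ^ 2 := by
      rw [map_add, _root_.map_smul]
      have hn := @norm_add_sq ℂ _ _ _ _ (S w) ((σ:ℂ) • S ψ)
      have hinner : (inner ℂ (S w) ((σ:ℂ) • S ψ) : ℂ).re = σ * r := by
        rw [inner_smul_right]
        simp [hr, Complex.mul_re]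
      have hns : ‖(σ:ℂ) • S ψ‖ ^ 2 = σ ^ 2 * ‖S ψ‖ ^ 2 := by
        rw [norm_smul, mul_pow, Complex.norm_real, Real.norm_eq_abs, sq_abs]
      rw [hns] at hn
      have : RCLike.re (inner ℂ (S w) ((σ:ℂ) • S ψ) : ℂ)
          = (inner ℂ (S w) ((σ:ℂ) • S ψ) : ℂ).re := rfl
      rw [hn, this, hinner]
    have hge : B ^ 2 ≤ ‖S (w + (σ:ℂ) • ψ)‖ ^ 2 := by
      rw [expand, hSψ, hσsq]
      nlinarith [sq_nonneg ‖S w‖, norm_nonneg (S w)]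
    nlinarith [norm_nonneg (S (w + (σ:ℂ) • ψ))]

end step
section iter
variable {H : Type*} [NormedAddCommGroup H]

/-- iteration helper -/
def iter (f : ℕ → ℝ × H → ℝ × H) : ℕ → ℝ × H
  | 0 => (1, 0)
  | (n+1) => f n (iter f n)

lemma iter_zero (f : ℕ → ℝ × H → ℝ × H) : iter f 0 = (1, 0) := rfl

lemma iter_succ (f : ℕ → ℝ × H → ℝ × H) (n : ℕ) : iter f (n+1) = f n (iter f n) := rfl

end iter
end Stmt11Aux

set_option maxHeartbeats 2000000 in
/-- For every `x ∈ σ(T)` there exists `η ∈ H` with `d⁻_{μ_η}(x) = 0`. -/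
theorem stmt_11 {H : Type*} [NormedAddCommGroup H] [InnerProductSpace ℂ H] [CompleteSpace H]
    [TopologicalSpace.SeparableSpace H] (hinf : ¬ FiniteDimensional ℂ H)
    (T : H →L[ℂ] H) (hT : IsSelfAdjoint T)
    (μm : H → Measure ℝ) (hμm : ∀ ψ : H, IsSpectralMeasure T ψ (μm ψ))
    (x : ℝ) (hx : x ∈ realSpectrum T) :
    ∃ η : H, dLow (μm η) x = 0 := by
  classical
  haveI hH : Nontrivial H := by
    by_contra hcon
    rw [not_nontrivial_iff_subsingleton] at hcon
    exact hinf inferInstance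
  have hsm : ∀ ψ : H, Stmt11Aux.SpecMeas T ψ (μm ψ) :=
    fun ψ => ⟨(hμm ψ).1, (hμm ψ).2.2⟩
  have hx' : (x:ℂ) ∈ spectrum ℂ T := hx
  have hxR : x ∈ spectrum ℝ T := by
    rw [spectrum.mem_iff] at hx' ⊢
    rwa [show (algebraMap ℝ (H →L[ℂ] H)) x = algebraMap ℂ (H →L[ℂ] H) (x:ℂ) by
      rw [IsScalarTower.algebraMap_apply ℝ ℂ (H →L[ℂ] H)]; rfl]
  -- choice of step vectors
  have hstep : ∀ (w : H) (ε B : ℝ), ∃ v : H, 0 < ε → 0 < B →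
      (‖v‖ ≤ B ∧ B ≤ ‖Stmt11Aux.sqT T x ε (w + v)‖) := by
    intro w ε B
    by_cases h : 0 < ε ∧ 0 < B
    · obtain ⟨v, h1, h2⟩ := Stmt11Aux.step_ex hT hsm hxR w h.1 h.2
      exact ⟨v, fun _ _ => ⟨h1, h2⟩⟩
    · exact ⟨0, fun h1 h2 => absurd ⟨h1, h2⟩ h⟩
  choose V hV using hstep
  set Bs : ℕ → ℝ := fun n => (1/4:ℝ)^(n+1) with hBs
  have hBpos : ∀ n, 0 < Bs n := fun n => by positivity
  set F : ℕ → ℝ × H → ℝ × H := fun n p =>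
    (min (p.1/2) ((Bs n / 2)^(2*(n+1))),
      p.2 + V p.2 (min (p.1/2) ((Bs n / 2)^(2*(n+1)))) (Bs n)) with hF
  set seq : ℕ → ℝ × H := Stmt11Aux.iter F with hseq
  have seqS : ∀ n, seq (n+1) = F n (seq n) := fun n => by
    rw [hseq, Stmt11Aux.iter_succ]
  set εs : ℕ → ℝ := fun n => (seq n).1 with hεs
  set ws : ℕ → H := fun n => (seq n).2 with hws
  have hε0 : εs 0 = 1 := by rw [hεs]; simp [hseq, Stmt11Aux.iter_zero]
  have hw0 : ws 0 = 0 := by rw [hws]; simp [hseq, Stmt11Aux.iter_zero]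
  have hεSmin : ∀ n, εs (n+1) = min (εs n/2) ((Bs n / 2)^(2*(n+1))) :=
    fun n => congrArg Prod.fst (seqS n)
  have hwS : ∀ n, ws (n+1) = ws n + V (ws n) (εs (n+1)) (Bs n) := by
    intro n
    have h1 := congrArg Prod.snd (seqS n)
    rw [hεSmin n]
    exact h1
  have hεpos : ∀ n, 0 < εs n := by
    intro n
    induction n with
    | zero => rw [hε0]; norm_num
    | succ n ih => rw [hεSmin n]; exact lt_min (by linarith) (by positivity)
  have hεhalf : ∀ n, εs (n+1) ≤ εs n / 2 := fun n => by
    rw [hεSmin n]; exact min_le_left _ _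
  have hεsmall : ∀ n, εs (n+1) ≤ (Bs n / 2)^(2*(n+1)) := fun n => by
    rw [hεSmin n]; exact min_le_right _ _
  have hεpow : ∀ n, εs n ≤ (1/2:ℝ)^n := by
    intro n
    induction n with
    | zero => rw [hε0]; norm_num
    | succ n ih =>
        calc εs (n+1) ≤ εs n / 2 := hεhalf n
          _ ≤ (1/2:ℝ)^n / 2 := by linarith
          _ = (1/2:ℝ)^(n+1) := by rw [pow_succ]; ring
  have hv : ∀ n, ‖V (ws n) (εs (n+1)) (Bs n)‖ ≤ Bs n ∧
      Bs n ≤ ‖Stmt11Aux.sqT T x (εs (n+1)) (ws n + V (ws n) (εs (n+1)) (Bs n))‖ :=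
    fun n => hV (ws n) (εs (n+1)) (Bs n) (hεpos (n+1)) (hBpos n)
  have hwd : ∀ n, ‖ws (n+1) - ws n‖ ≤ Bs n := by
    intro n
    rw [hwS n, add_sub_cancel_left]
    exact (hv n).1
  have hSlow : ∀ n, Bs n ≤ ‖Stmt11Aux.sqT T x (εs (n+1)) (ws (n+1))‖ := by
    intro n
    rw [hwS n]
    exact (hv n).2
  -- convergence
  have hcau : CauchySeq ws := by
    apply cauchySeq_of_le_geometric (1/4 : ℝ) (1/4 : ℝ) (by norm_num)
    intro n
    rw [dist_eq_norm, norm_sub_rev]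
    calc ‖ws (n+1) - ws n‖ ≤ Bs n := hwd n
      _ = 1/4 * (1/4:ℝ)^n := by simp only [hBs]; rw [pow_succ]; ring
  obtain ⟨η, hη⟩ := cauchySeq_tendsto_of_complete hcau
  have htail : ∀ n m, n ≤ m →
      ‖ws m - ws n‖ ≤ (4/3)*(1/4:ℝ)^(n+1) - (4/3)*(1/4:ℝ)^(m+1) := by
    intro n m hnm
    induction m, hnm using Nat.le_induction with
    | base => simp
    | succ m hnm ih =>
        have h1 : ‖ws (m+1) - ws n‖ ≤ ‖ws m - ws n‖ + ‖ws (m+1) - ws m‖ := by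
          have : ws (m+1) - ws n = (ws m - ws n) + (ws (m+1) - ws m) := by abel
          rw [this]; exact norm_add_le _ _
        have h2 := hwd m
        have h3 : (4/3)*(1/4:ℝ)^(m+2) = (4/3)*(1/4:ℝ)^(m+1) - (1/4:ℝ)^(m+1) := by
          rw [pow_succ]; ring
        have h4 : Bs m = (1/4:ℝ)^(m+1) := rfl
        rw [h4] at h2
        calc ‖ws (m+1) - ws n‖ ≤ ‖ws m - ws n‖ + (1/4:ℝ)^(m+1) := by linarith
          _ ≤ (4/3)*(1/4:ℝ)^(n+1) - (4/3)*(1/4:ℝ)^(m+1) + (1/4:ℝ)^(m+1) := by linarith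
          _ = (4/3)*(1/4:ℝ)^(n+1) - (4/3)*(1/4:ℝ)^(m+2) := by rw [h3]; ring
  have htail' : ∀ n, ‖η - ws n‖ ≤ (4/3)*(1/4:ℝ)^(n+1) := by
    intro n
    have hT2 : Tendsto (fun m => ‖ws m - ws n‖) atTop (𝓝 ‖η - ws n‖) :=
      ((hη.sub tendsto_const_nhds).norm)
    apply le_of_tendsto hT2
    filter_upwards [eventually_ge_atTop n] with m hm
    have := htail n m hm
    have hpos : (0:ℝ) < (4/3)*(1/4:ℝ)^(m+1) := by positivity
    linarith
  refine ⟨η, ?_⟩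
  haveI hfinη := Stmt11Aux.fin hsm η
  -- key lower bounds
  have key : ∀ n, (Bs n / 2)^2 ≤ ((μm η) (Metric.ball x (εs (n+1)))).toReal := by
    intro n
    have h1 : Bs n / 2 ≤ ‖Stmt11Aux.sqT T x (εs (n+1)) η‖ := by
      have hsub : Stmt11Aux.sqT T x (εs (n+1)) (ws (n+1))
          = Stmt11Aux.sqT T x (εs (n+1)) η
            - Stmt11Aux.sqT T x (εs (n+1)) (η - ws (n+1)) := by
        rw [← map_sub]
        congr 1
        abel
      have h2 : ‖Stmt11Aux.sqT T x (εs (n+1)) (ws (n+1))‖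
          ≤ ‖Stmt11Aux.sqT T x (εs (n+1)) η‖
            + ‖Stmt11Aux.sqT T x (εs (n+1)) (η - ws (n+1))‖ := by
        rw [hsub]; exact norm_sub_le _ _
      have h3 : ‖Stmt11Aux.sqT T x (εs (n+1)) (η - ws (n+1))‖ ≤ ‖η - ws (n+1)‖ :=
        Stmt11Aux.contract hT hsm _
      have h4 := htail' (n+1)
      have h5 := hSlow n
      have h6 : (4/3)*(1/4:ℝ)^(n+2) ≤ (1/4:ℝ)^(n+1) / 2 := by
        rw [pow_succ]; nlinarith [pow_pos (show (0:ℝ) < 1/4 by norm_num) (n+1)]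
      have h7 : Bs n = (1/4:ℝ)^(n+1) := rfl
      rw [h7] at h5 ⊢
      linarith
    have h2 := Stmt11Aux.meas_ge hsm (x := x) (hεpos (n+1)) η
    nlinarith [norm_nonneg (Stmt11Aux.sqT T x (εs (n+1)) η), hBpos n]
  have hmass1 : ((μm η) Set.univ).toReal ≤ 1 := by
    rw [Stmt11Aux.mass hsm hT η]
    have := htail' 0
    rw [hw0, sub_zero] at this
    nlinarith [norm_nonneg η]
  have hball1 : ∀ ε : ℝ, ((μm η) (Metric.ball x ε)).toReal ≤ 1 := by
    intro ε
    refine le_trans ?_ hmass1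
    exact ENNReal.toReal_mono (measure_ne_top _ _) (measure_mono (Set.subset_univ _))
  have hballs : ∀ ε : ℝ, 0 < ε → 0 < ((μm η) (Metric.ball x ε)).toReal := by
    intro ε hε'
    obtain ⟨n, hn⟩ := exists_pow_lt_of_lt_one hε' (by norm_num : (1/2:ℝ) < 1)
    have hle : εs (n+1) ≤ ε := by
      calc εs (n+1) ≤ (1/2:ℝ)^(n+1) := hεpow (n+1)
        _ ≤ (1/2:ℝ)^n := by
            rw [pow_succ]
            nlinarith [pow_pos (show (0:ℝ) < 1/2 by norm_num) n]
        _ ≤ ε := hn.le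
    have hmono : ((μm η) (Metric.ball x (εs (n+1)))).toReal
        ≤ ((μm η) (Metric.ball x ε)).toReal :=
      ENNReal.toReal_mono (measure_ne_top _ _)
        (measure_mono (Metric.ball_subset_ball hle))
    have := key n
    nlinarith [hBpos n]
  have hne : ¬ ∃ ε > (0:ℝ), (μm η) (Metric.ball x ε) = 0 := by
    rintro ⟨ε, hε', h0⟩
    have := hballs ε hε'
    rw [h0] at this
    simp at this
  rw [dLow, if_neg hne]
  -- the quotient bound along the sequence
  have hεlt1 : ∀ n, εs (n+1) < 1 := by
    intro n
    have := hεpow (n+1)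
    have h2 : (1/2:ℝ)^(n+1) ≤ 1/2 := by
      rw [pow_succ]
      nlinarith [pow_le_one₀ (show (0:ℝ) ≤ 1/2 by norm_num) (show (1/2:ℝ) ≤ 1 by norm_num) (n := n),
        pow_pos (show (0:ℝ) < 1/2 by norm_num) n]
    linarith
  have hQle : ∀ n : ℕ,
      Real.log ((μm η) (Metric.ball x (εs (n+1)))).toReal / Real.log (εs (n+1))
        ≤ 1/((n:ℝ)+1) := by
    intro n
    set D : ℝ := Bs n / 2 with hD
    set a : ℝ := ((μm η) (Metric.ball x (εs (n+1)))).toReal with ha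
    have hD0 : 0 < D := by positivity
    have hD1 : D < 1 := by
      have h1 : Bs n ≤ 1 := by
        rw [hBs]
        exact pow_le_one₀ (by norm_num) (by norm_num)
      rw [hD]
      linarith
    have hA0 : D^2 ≤ a := key n
    have hApos : 0 < a := lt_of_lt_of_le (by positivity) hA0
    have hA1 : a ≤ 1 := hball1 _
    have hLa1 : Real.log a ≤ 0 := Real.log_nonpos hApos.le hA1
    have hLa2 : 2 * Real.log D ≤ Real.log a := by
      have h := Real.log_le_log (by positivity) hA0
      rwa [show D^2 = D^(2:ℕ) from rfl, Real.log_pow, Nat.cast_ofNat] at h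
    have hLd : Real.log D < 0 := Real.log_neg hD0 hD1
    have hLε : Real.log (εs (n+1)) ≤ (2*((n:ℝ)+1)) * Real.log D := by
      have h1 : Real.log (εs (n+1)) ≤ Real.log (D^(2*(n+1))) :=
        Real.log_le_log (hεpos (n+1)) (hεsmall n)
      rw [Real.log_pow] at h1
      push_cast at h1
      linarith
    have hLεneg : Real.log (εs (n+1)) < 0 := Real.log_neg (hεpos (n+1)) (hεlt1 n)
    rw [div_le_iff_of_neg hLεneg]
    have hn1 : (0:ℝ) < (n:ℝ)+1 := by positivity
    have hmul := mul_le_mul_of_nonneg_left hLε (le_of_lt (one_div_pos.2 hn1))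
    have heq : (1/((n:ℝ)+1)) * ((2*((n:ℝ)+1)) * Real.log D) = 2 * Real.log D := by
      field_simp
    rw [heq] at hmul
    linarith
  set Lf : ℝ → EReal :=
    fun ε : ℝ => ((Real.log ((μm η) (Metric.ball x ε)).toReal / Real.log ε : ℝ) : EReal)
    with hLf
  have hlim_ge : (0:EReal) ≤ Filter.liminf Lf (𝓝[>] (0:ℝ)) := by
    apply Filter.le_liminf_of_le (by isBoundedDefault)
    filter_upwards [Ioo_mem_nhdsGT_of_mem (Set.left_mem_Ico.2 zero_lt_one)] with ε hε'
    have h1 : Real.log ((μm η) (Metric.ball x ε)).toReal ≤ 0 :=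
      Real.log_nonpos ENNReal.toReal_nonneg (hball1 ε)
    have h2 : Real.log ε ≤ 0 := Real.log_nonpos hε'.1.le hε'.2.le
    have h3 : (0:ℝ) ≤ Real.log ((μm η) (Metric.ball x ε)).toReal / Real.log ε :=
      div_nonneg_of_nonpos h1 h2
    show (0:EReal) ≤ ((Real.log ((μm η) (Metric.ball x ε)).toReal / Real.log ε : ℝ) : EReal)
    exact_mod_cast h3
  have htend : Tendsto (fun n : ℕ => εs (n+1)) atTop (𝓝[>] (0:ℝ)) := by
    apply tendsto_nhdsWithin_of_tendsto_nhds_of_eventually_within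
    · exact squeeze_zero (fun n => (hεpos (n+1)).le) (fun n => hεpow (n+1))
        ((tendsto_pow_atTop_nhds_zero_of_lt_one (by norm_num) (by norm_num)).comp
          (tendsto_add_atTop_nat 1))
    · exact Filter.Eventually.of_forall fun n => hεpos (n+1)
  have hlim_le : ∀ m : ℕ,
      Filter.liminf Lf (𝓝[>] (0:ℝ)) ≤ ((1/((m:ℝ)+1) : ℝ) : EReal) := by
    intro m
    apply Filter.liminf_le_of_frequently_le'
    apply htend.frequently
    rw [Filter.frequently_atTop]
    intro N
    refine ⟨max N m, le_max_left _ _, ?_⟩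
    have h1 := hQle (max N m)
    have h2 : 1/(((max N m : ℕ):ℝ)+1) ≤ 1/((m:ℝ)+1) := by
      apply one_div_le_one_div_of_le (by positivity)
      have : (m:ℝ) ≤ ((max N m : ℕ):ℝ) := Nat.cast_le.2 (le_max_right N m)
      linarith
    have h3 := le_trans h1 h2
    show ((Real.log ((μm η) (Metric.ball x (εs (max N m + 1)))).toReal
      / Real.log (εs (max N m + 1)) : ℝ) : EReal) ≤ ((1/((m:ℝ)+1) : ℝ) : EReal)
    exact_mod_cast h3
  refine le_antisymm ?_ hlim_ge
  by_contra hlt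
  push_neg at hlt
  obtain ⟨y, hy0, hyl⟩ := EReal.exists_between_coe_real hlt
  have hy0' : (0:ℝ) < y := EReal.coe_lt_coe_iff.1 (by exact_mod_cast hy0)
  obtain ⟨m, hm⟩ := exists_nat_one_div_lt hy0'
  have hchain : Filter.liminf Lf (𝓝[>] (0:ℝ)) < Filter.liminf Lf (𝓝[>] (0:ℝ)) :=
    lt_of_le_of_lt (hlim_le m) (lt_trans (EReal.coe_lt_coe_iff.2 hm) hyl)
  exact lt_irrefl _ hchain
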